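/- Let k > 0, α ≥ 0, η ∈ (α/k, 1), T ≥ 0, and let 0 < β < d with β < 2(kη − α). Then there is a finite constant C such that for all 0 ≤ t₁ ≤ t₂ ≤ T and every ξ ∈ ℝ^d, ∫_{ℝ^d} ‖ζ‖^{β−d} (1 + ‖ξ − ζ‖²)^{α} (sin(t₂‖ξ − ζ‖^k) − sin(t₁‖ξ − ζ‖^k))² / ‖ξ − ζ‖^{2k} dζ ≤ C (t₂ − t₁)^{2(1−η)}. -/

import Mathlib

open Real MeasureTheory Metric Set
open scoped ENNReal NNReal

open scoped Classical in
lemma aux_meas_rpow (d : ℕ) (c : ℝ) (hc : c ≠ 0) :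
    Measurable (α := EuclideanSpace ℝ (Fin d)) fun ζ : EuclideanSpace ℝ (Fin d) => ENNReal.ofReal (‖ζ‖ ^ c) := by
  have heq : (fun ζ : EuclideanSpace ℝ (Fin d) => ‖ζ‖ ^ c)
      = Set.piecewise {(0 : EuclideanSpace ℝ (Fin d))} (fun _ => (0:ℝ))
        (fun ζ => Real.exp (Real.log ‖ζ‖ * c)) := by
    funext ζ
    by_cases h : ζ = 0
    · simp [h, Real.zero_rpow hc, Set.piecewise_eq_of_mem]
    · rw [Set.piecewise_eq_of_notMem _ _ _ (by simpa using h)]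
      rw [Real.rpow_def_of_pos (norm_pos_iff.2 h)]
  have : Measurable (fun ζ : EuclideanSpace ℝ (Fin d) => ‖ζ‖ ^ c) := by
    rw [heq]
    exact Measurable.piecewise (measurableSet_singleton _) measurable_const
      ((measurable_norm.log.mul_const c).exp)
  exact this.ennreal_ofReal
open scoped ENNReal NNReal

lemma aux_ball_lt_top (d : ℕ) {p : ℝ} (hp : 0 < p) (hpd : p < d) :
    ∫⁻ ζ in Metric.ball (0 : EuclideanSpace ℝ (Fin d)) 1,
      ENNReal.ofReal (‖ζ‖ ^ (p - d)) < ⊤ := by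
  set E := EuclideanSpace ℝ (Fin d)
  set r : ℕ → ℝ := fun n => (1 / 2 : ℝ) ^ n with hr
  have hr_pos : ∀ n, 0 < r n := fun n => by positivity
  set S : ℕ → Set E := fun n => closedBall (0 : E) (r n) \ ball 0 (r (n + 1)) with hS
  have hsub : ball (0 : E) 1 ⊆ {0} ∪ ⋃ n, S n := by
    intro ζ hζ
    rcases eq_or_ne ζ 0 with h0 | h0
    · exact Or.inl h0
    · have hpos : 0 < ‖ζ‖ := norm_pos_iff.2 h0
      have hex : ∃ n, r n ≤ ‖ζ‖ := by
        obtain ⟨n, hn⟩ := exists_pow_lt_of_lt_one hpos (by norm_num : (1/2 : ℝ) < 1)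
        exact ⟨n, hn.le⟩
      have h1 : ‖ζ‖ < 1 := by simpa [mem_ball, dist_eq_norm] using hζ
      have hn0 : Nat.find hex ≠ 0 := by
        intro h
        have := Nat.find_spec hex
        rw [h] at this
        simp [hr] at this
        linarith
      refine Or.inr (Set.mem_iUnion.2 ⟨Nat.find hex - 1, ?_⟩)
      constructor
      · have := Nat.find_min hex (m := Nat.find hex - 1) (Nat.sub_lt (Nat.pos_of_ne_zero hn0) one_pos)
        simp only [not_le] at this
        simpa [mem_closedBall, dist_eq_norm] using this.le
      · have : r (Nat.find hex - 1 + 1) ≤ ‖ζ‖ := by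
          rw [Nat.sub_add_cancel (Nat.one_le_iff_ne_zero.2 hn0)]
          exact Nat.find_spec hex
        simp only [mem_ball, dist_eq_norm, sub_zero, not_lt]
        simpa using this
  set f : E → ℝ≥0∞ := fun ζ => ENNReal.ofReal (‖ζ‖ ^ (p - d)) with hf
  have key : ∫⁻ ζ in ball (0 : E) 1, f ζ ≤
      (∫⁻ ζ in ({0} : Set E), f ζ) + ∑' n, ∫⁻ ζ in S n, f ζ := by
    calc ∫⁻ ζ in ball (0 : E) 1, f ζ ≤ ∫⁻ ζ in ({0} : Set E) ∪ ⋃ n, S n, f ζ :=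
          lintegral_mono_set hsub
      _ ≤ (∫⁻ ζ in ({0} : Set E), f ζ) + ∫⁻ ζ in ⋃ n, S n, f ζ := lintegral_union_le _ _ _
      _ ≤ _ := by gcongr; exact lintegral_iUnion_le _ _
  have h0 : ∫⁻ ζ in ({0} : Set E), f ζ = 0 := by
    have : ∀ᵐ ζ ∂(volume.restrict ({0} : Set E)), f ζ = 0 := by
      refine (ae_restrict_iff' (measurableSet_singleton _)).2 (ae_of_all _ ?_)
      intro ζ hζ
      simp only [Set.mem_singleton_iff] at hζ
      simp [hf, hζ, Real.zero_rpow (by linarith : p - (d:ℝ) ≠ 0)]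
    calc ∫⁻ ζ in ({0} : Set E), f ζ = ∫⁻ ζ in ({0} : Set E), 0 := lintegral_congr_ae this
      _ = 0 := by simp
  set V : ℝ≥0∞ := volume (ball (0 : E) 1) with hV
  have hVlt : V < ⊤ := measure_ball_lt_top
  have hterm : ∀ n, ∫⁻ ζ in S n, f ζ ≤
      ENNReal.ofReal ((1/2 : ℝ) ^ (p - d)) * ENNReal.ofReal ((1/2 : ℝ) ^ p) ^ n * V := by
    intro n
    have hmeas : MeasurableSet (S n) := measurableSet_closedBall.diff measurableSet_ball
    have hb : ∀ ζ ∈ S n, f ζ ≤ ENNReal.ofReal ((r (n+1)) ^ (p - d)) := by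
      intro ζ hζ
      have h1 : r (n+1) ≤ ‖ζ‖ := by
        have := hζ.2
        simpa [mem_ball, dist_eq_norm, not_lt] using this
      exact ENNReal.ofReal_le_ofReal
        (Real.rpow_le_rpow_of_nonpos (hr_pos _) h1 (by linarith))
    calc ∫⁻ ζ in S n, f ζ ≤ ∫⁻ _ in S n, ENNReal.ofReal ((r (n+1)) ^ (p - d)) :=
          setLIntegral_mono' hmeas hb
      _ = ENNReal.ofReal ((r (n+1)) ^ (p - d)) * volume (S n) := setLIntegral_const _ _
      _ ≤ ENNReal.ofReal ((r (n+1)) ^ (p - d)) * (ENNReal.ofReal ((r n) ^ d) * V) := by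
          gcongr
          calc volume (S n) ≤ volume (closedBall (0 : E) (r n)) := measure_mono diff_subset
            _ = ENNReal.ofReal ((r n) ^ d) * V := by
                rw [hV, Measure.addHaar_closedBall _ _ (hr_pos n).le]
                congr 2
                rw [finrank_euclideanSpace_fin]
      _ = ENNReal.ofReal ((1/2 : ℝ) ^ (p - d)) * ENNReal.ofReal ((1/2 : ℝ) ^ p) ^ n * V := by
          rw [← mul_assoc]
          congr 1
          rw [← ENNReal.ofReal_pow (by positivity), ← ENNReal.ofReal_mul (by positivity),
            ← ENNReal.ofReal_mul (by positivity)]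
          congr 1
          have e1 : (r (n+1)) ^ (p - d) = (1/2 : ℝ) ^ (((n:ℝ) + 1) * (p - d)) := by
            simp only [hr]
            rw [← Real.rpow_natCast (1/2 : ℝ) (n+1), ← Real.rpow_mul (by norm_num)]
            push_cast
            ring_nf
          have e2 : ((r n) : ℝ) ^ d = (1/2 : ℝ) ^ ((n : ℝ) * d) := by
            simp only [hr]
            rw [← Real.rpow_natCast (1/2 : ℝ) n, ← Real.rpow_natCast ((1/2:ℝ) ^ (n:ℝ)) d,
              ← Real.rpow_mul (by norm_num)]
          have e3 : ((1/2 : ℝ) ^ p) ^ n = (1/2 : ℝ) ^ ((n:ℝ) * p) := by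
            rw [← Real.rpow_natCast ((1/2:ℝ) ^ p) n, ← Real.rpow_mul (by norm_num)]
            ring_nf
          rw [e1, e2, e3, ← Real.rpow_add (by norm_num), ← Real.rpow_add (by norm_num)]
          ring_nf
  refine lt_of_le_of_lt key ?_
  rw [h0, zero_add]
  refine lt_of_le_of_lt (ENNReal.tsum_le_tsum hterm) ?_
  set a : ℝ≥0∞ := ENNReal.ofReal ((1/2 : ℝ) ^ (p - d)) with ha
  set q : ℝ≥0∞ := ENNReal.ofReal ((1/2 : ℝ) ^ p) with hq'
  have hq : q < 1 := by
    rw [hq', ← ENNReal.ofReal_one]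
    exact ENNReal.ofReal_lt_ofReal_iff (by norm_num) |>.2
      (Real.rpow_lt_one (by norm_num) (by norm_num) hp)
  have hre : ∀ n : ℕ, a * q ^ n * V = (a * V) * q ^ n := fun n => by ring
  rw [tsum_congr hre, ENNReal.tsum_mul_left, ENNReal.tsum_geometric]
  refine ENNReal.mul_lt_top ?_ ?_
  · exact ENNReal.mul_lt_top ENNReal.ofReal_lt_top hVlt
  · rw [lt_top_iff_ne_top, Ne, ENNReal.inv_eq_top, tsub_eq_zero_iff_le]
    exact not_le.mpr hq
open scoped ENNReal NNReal

lemma aux_tail_lt_top (d : ℕ) {q : ℝ} (hq : (d : ℝ) < q) :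
    ∫⁻ ζ in {ζ : EuclideanSpace ℝ (Fin d) | 1 ≤ ‖ζ‖}, ENNReal.ofReal (‖ζ‖ ^ (-q)) < ⊤ := by
  set E := EuclideanSpace ℝ (Fin d)
  have hq0 : 0 < q := lt_of_le_of_lt (Nat.cast_nonneg d) hq
  have hmeas : MeasurableSet {ζ : E | 1 ≤ ‖ζ‖} :=
    measurableSet_le measurable_const measurable_norm
  have hint : Integrable (fun ζ : E => (2:ℝ) ^ q * (1 + ‖ζ‖) ^ (-q)) := by
    refine (integrable_one_add_norm ?_).const_mul _
    rwa [finrank_euclideanSpace_fin]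
  calc ∫⁻ ζ in {ζ : E | 1 ≤ ‖ζ‖}, ENNReal.ofReal (‖ζ‖ ^ (-q))
      ≤ ∫⁻ ζ in {ζ : E | 1 ≤ ‖ζ‖}, ENNReal.ofReal ((2:ℝ) ^ q * (1 + ‖ζ‖) ^ (-q)) := by
        refine setLIntegral_mono' hmeas fun ζ hζ => ?_
        refine ENNReal.ofReal_le_ofReal ?_
        have h1 : (0:ℝ) < 1 + ‖ζ‖ := by positivity
        have h2 : (1 + ‖ζ‖) ≤ 2 * ‖ζ‖ := by
          have : (1:ℝ) ≤ ‖ζ‖ := hζ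
          linarith
        have h3 : (2 * ‖ζ‖ : ℝ) ^ (-q) ≤ (1 + ‖ζ‖) ^ (-q) :=
          Real.rpow_le_rpow_of_nonpos h1 h2 (by linarith)
        have h4 : ((2:ℝ) * ‖ζ‖) ^ (-q) = (2:ℝ) ^ (-q) * ‖ζ‖ ^ (-q) :=
          Real.mul_rpow (by norm_num) (norm_nonneg _)
        calc ‖ζ‖ ^ (-q) = (2:ℝ) ^ q * ((2:ℝ) ^ (-q) * ‖ζ‖ ^ (-q)) := by
              rw [← mul_assoc, ← Real.rpow_add (by norm_num), add_neg_cancel,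
                Real.rpow_zero, one_mul]
          _ = (2:ℝ) ^ q * ((2:ℝ) * ‖ζ‖) ^ (-q) := by rw [h4]
          _ ≤ (2:ℝ) ^ q * (1 + ‖ζ‖) ^ (-q) := by
              have : (0:ℝ) < (2:ℝ) ^ q := by positivity
              nlinarith [h3]
    _ ≤ ∫⁻ ζ : E, ENNReal.ofReal ((2:ℝ) ^ q * (1 + ‖ζ‖) ^ (-q)) :=
        setLIntegral_le_lintegral _ _
    _ < ⊤ := hint.lintegral_lt_top
open scoped ENNReal NNReal

lemma aux_sin_lip (a b : ℝ) : |Real.sin a - Real.sin b| ≤ |a - b| := by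
  rw [Real.sin_sub_sin]
  have h1 : |Real.sin ((a - b) / 2)| ≤ |(a - b) / 2| := Real.abs_sin_le_abs
  have h2 : |Real.cos ((a + b) / 2)| ≤ 1 := Real.abs_cos_le_one _
  calc |2 * Real.sin ((a - b) / 2) * Real.cos ((a + b) / 2)|
      = 2 * |Real.sin ((a - b) / 2)| * |Real.cos ((a + b) / 2)| := by
        rw [abs_mul, abs_mul, abs_two]
    _ ≤ 2 * |(a - b) / 2| * 1 := by
        apply mul_le_mul _ h2 (abs_nonneg _) (by positivity)
        apply mul_le_mul_of_nonneg_left h1 (by norm_num)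
    _ = |a - b| := by rw [mul_one, abs_div, abs_two]; ring

lemma aux_sin_two (a b : ℝ) : |Real.sin a - Real.sin b| ≤ 2 := by
  have h1 := Real.sin_le_one a
  have h2 := Real.neg_one_le_sin a
  have h3 := Real.sin_le_one b
  have h4 := Real.neg_one_le_sin b
  rw [abs_le]; constructor <;> linarith

lemma aux_pointwise (d : ℕ) (k α η T β γ : ℝ) (hk : 0 < k) (hα : 0 ≤ α) (hη0 : 0 < η)
    (hη₂ : η < 1) (hT : 0 ≤ T) (hβd : β - d ≤ 0) (hγ : γ = 2 * k * η - 2 * α) (hγ0 : 0 < γ)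
    (t₁ t₂ : ℝ) (ht₁ : 0 ≤ t₁) (ht₁₂ : t₁ ≤ t₂) (ht₂ : t₂ ≤ T)
    (s r : ℝ) (hs : 0 ≤ s) (hr : 0 ≤ r) :
    s ^ (β - d) * (1 + r ^ 2) ^ α *
        (Real.sin (t₂ * r ^ k) - Real.sin (t₁ * r ^ k)) ^ 2 / r ^ (2 * k)
      ≤ (2 ^ α * max (T ^ (2 * η)) 4) * (t₂ - t₁) ^ (2 * (1 - η)) *
        (if r < 1 then (if s < 1 then s ^ (β - (d:ℝ)) else 1)
         else (if s < 1 then s ^ (β - (d:ℝ))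
               else (if s ≤ r then s ^ (β - d - γ) else r ^ (β - d - γ)))) := by
  set Δ := t₂ - t₁ with hΔdef
  set y := r ^ k with hydef
  set S := Real.sin (t₂ * y) - Real.sin (t₁ * y) with hSdef
  set e := 2 * (1 - η) with hedef
  set K := (2:ℝ) ^ α * max (T ^ (2 * η)) 4 with hKdef
  have hΔ0 : 0 ≤ Δ := sub_nonneg.2 ht₁₂
  have hΔT : Δ ≤ T := by simp only [hΔdef]; linarith
  have he0 : 0 < e := by simp only [hedef]; linarith
  have hy0 : 0 ≤ y := Real.rpow_nonneg hr _
  have h2α : (0:ℝ) < 2 ^ α := Real.rpow_pos_of_pos two_pos _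
  have hK0 : 0 ≤ K := by
    have : (0:ℝ) ≤ max (T ^ (2 * η)) 4 := le_max_of_le_right (by norm_num)
    positivity
  have hite : 0 ≤ (if r < 1 then (if s < 1 then s ^ (β - (d:ℝ)) else 1)
         else (if s < 1 then s ^ (β - (d:ℝ))
               else (if s ≤ r then s ^ (β - d - γ) else r ^ (β - d - γ)))) := by
    split_ifs <;> positivity
  have hsβ : 0 ≤ s ^ (β - (d:ℝ)) := Real.rpow_nonneg hs _
  -- trivial case Δ = 0
  rcases eq_or_lt_of_le hΔ0 with hΔz | hΔpos
  · have ht : t₁ = t₂ := by simp only [hΔdef] at hΔz; linarith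
    have hLHS : s ^ (β - (d:ℝ)) * (1 + r ^ 2) ^ α * S ^ 2 / r ^ (2 * k) = 0 := by
      simp [hSdef, ht]
    rw [hLHS]
    have : Δ ^ e = 0 := by
      rw [← hΔz, Real.zero_rpow he0.ne']
    rw [this, mul_zero, zero_mul]
  -- trivial case r = 0
  rcases eq_or_lt_of_le hr with hrz | hr0
  · have h2k : r ^ (2 * k) = 0 := by
      rw [← hrz, Real.zero_rpow (by positivity : 2 * k ≠ 0)]
    rw [h2k, div_zero]
    exact mul_nonneg (mul_nonneg hK0 (Real.rpow_nonneg hΔ0 _)) hite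
  -- Lipschitz bound
  have hSb : |S| ≤ Δ * y := by
    have h1 := aux_sin_lip (t₂ * y) (t₁ * y)
    have h2 : t₂ * y - t₁ * y = Δ * y := by ring
    rw [h2] at h1
    rwa [abs_of_nonneg (by positivity : 0 ≤ Δ * y)] at h1
  have hSsq : ∀ c : ℝ, |S| ≤ c → S ^ 2 ≤ c ^ 2 := by
    intro c hc
    have := mul_self_le_mul_self (abs_nonneg S) hc
    rwa [abs_mul_abs_self, ← pow_two, ← pow_two] at this
  by_cases hr1 : r < 1
  · -- case r < 1
    rw [if_pos hr1]
    have hy2 : y ^ 2 = r ^ (2 * k) := by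
      rw [hydef, ← Real.rpow_natCast (r ^ k) 2, ← Real.rpow_mul hr]
      norm_num [mul_comm]
    have h1r : (1 + r ^ 2) ^ α ≤ 2 ^ α := by
      apply Real.rpow_le_rpow (by positivity) _ hα
      nlinarith
    have hdiv : S ^ 2 / r ^ (2 * k) ≤ Δ ^ 2 := by
      rw [div_le_iff₀ (Real.rpow_pos_of_pos hr0 _)]
      calc S ^ 2 ≤ (Δ * y) ^ 2 := hSsq _ hSb
        _ = Δ ^ 2 * y ^ 2 := by ring
        _ = Δ ^ 2 * r ^ (2 * k) := by rw [hy2]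
    have hΔ2 : Δ ^ 2 ≤ Δ ^ e * T ^ (2 * η) := by
      have h1 : Δ ^ (2:ℝ) = Δ ^ e * Δ ^ (2 * η) := by
        rw [← Real.rpow_add hΔpos]
        congr 1
        simp only [hedef]; ring
      have h2 : Δ ^ (2 * η) ≤ T ^ (2 * η) := Real.rpow_le_rpow hΔ0 hΔT (by positivity)
      have h3 : Δ ^ (2:ℕ) = Δ ^ (2:ℝ) := by
        rw [← Real.rpow_natCast Δ 2]; norm_num
      rw [h3, h1]
      exact mul_le_mul_of_nonneg_left h2 (Real.rpow_nonneg hΔ0 e)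
    have key : s ^ (β - (d:ℝ)) * (1 + r ^ 2) ^ α * S ^ 2 / r ^ (2 * k)
        ≤ s ^ (β - (d:ℝ)) * (2 ^ α * (Δ ^ e * T ^ (2 * η))) := by
      calc s ^ (β - (d:ℝ)) * (1 + r ^ 2) ^ α * S ^ 2 / r ^ (2 * k)
          = s ^ (β - (d:ℝ)) * ((1 + r ^ 2) ^ α * (S ^ 2 / r ^ (2 * k))) := by ring
        _ ≤ s ^ (β - (d:ℝ)) * (2 ^ α * Δ ^ 2) := by
            apply mul_le_mul_of_nonneg_left _ hsβ
            apply mul_le_mul h1r hdiv (by positivity) (by positivity)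
        _ ≤ s ^ (β - (d:ℝ)) * (2 ^ α * (Δ ^ e * T ^ (2 * η))) := by
            apply mul_le_mul_of_nonneg_left _ hsβ
            exact mul_le_mul_of_nonneg_left hΔ2 h2α.le
    refine key.trans ?_
    have hTm : T ^ (2 * η) ≤ max (T ^ (2 * η)) 4 := le_max_left _ _
    have hΔe : 0 ≤ Δ ^ e := Real.rpow_nonneg hΔ0 _
    by_cases hs1 : s < 1
    · rw [if_pos hs1]
      calc s ^ (β - (d:ℝ)) * (2 ^ α * (Δ ^ e * T ^ (2 * η)))
          = 2 ^ α * T ^ (2 * η) * Δ ^ e * s ^ (β - (d:ℝ)) := by ring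
        _ ≤ K * Δ ^ e * s ^ (β - (d:ℝ)) := by
            apply mul_le_mul_of_nonneg_right _ hsβ
            apply mul_le_mul_of_nonneg_right _ hΔe
            rw [hKdef]
            exact mul_le_mul_of_nonneg_left hTm h2α.le
    · rw [if_neg hs1]
      push_neg at hs1
      have hsle : s ^ (β - (d:ℝ)) ≤ 1 := Real.rpow_le_one_of_one_le_of_nonpos hs1 hβd
      calc s ^ (β - (d:ℝ)) * (2 ^ α * (Δ ^ e * T ^ (2 * η)))
          ≤ 1 * (2 ^ α * (Δ ^ e * T ^ (2 * η))) := by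
            apply mul_le_mul_of_nonneg_right hsle (by positivity)
        _ = 2 ^ α * T ^ (2 * η) * Δ ^ e := by ring
        _ ≤ K * Δ ^ e * 1 := by
            rw [mul_one]
            apply mul_le_mul_of_nonneg_right _ hΔe
            rw [hKdef]
            exact mul_le_mul_of_nonneg_left hTm h2α.le
  · -- case r ≥ 1
    rw [if_neg hr1]
    push_neg at hr1
    have hy1 : 1 ≤ y := by
      rw [hydef, show (1:ℝ) = 1 ^ k by simp]
      exact Real.rpow_le_rpow zero_le_one hr1 hk.le
    have hx0 : 0 < Δ * y := by positivity
    have hSmin : |S| ≤ 2 ^ η * (Δ * y) ^ (1 - η) := by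
      by_cases hxy : Δ * y ≤ 2
      · have h1 : Δ * y = (Δ * y) ^ η * (Δ * y) ^ (1 - η) := by
          rw [← Real.rpow_add hx0]; simp
        have h2 : (Δ * y) ^ η ≤ 2 ^ η := Real.rpow_le_rpow hx0.le hxy hη0.le
        calc |S| ≤ Δ * y := hSb
          _ = (Δ * y) ^ η * (Δ * y) ^ (1 - η) := h1
          _ ≤ 2 ^ η * (Δ * y) ^ (1 - η) :=
            mul_le_mul_of_nonneg_right h2 (Real.rpow_nonneg hx0.le _)
      · push_neg at hxy
        have h1 : (2:ℝ) = 2 ^ η * 2 ^ (1 - η) := by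
          rw [← Real.rpow_add two_pos]; simp
        have h2 : (2:ℝ) ^ (1 - η) ≤ (Δ * y) ^ (1 - η) :=
          Real.rpow_le_rpow (by norm_num) hxy.le (by linarith)
        calc |S| ≤ 2 := aux_sin_two _ _
          _ = 2 ^ η * 2 ^ (1 - η) := h1
          _ ≤ 2 ^ η * (Δ * y) ^ (1 - η) :=
            mul_le_mul_of_nonneg_left h2 (by positivity)
    have hSsq2 : S ^ 2 ≤ 4 * (Δ ^ e * y ^ e) := by
      have h1 : S ^ 2 ≤ (2 ^ η * (Δ * y) ^ (1 - η)) ^ 2 := hSsq _ hSmin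
      have h2 : ((2:ℝ) ^ η * (Δ * y) ^ (1 - η)) ^ 2
          = (2 ^ η) ^ 2 * ((Δ * y) ^ (1 - η)) ^ 2 := by ring
      have h3 : ((2:ℝ) ^ η) ^ 2 ≤ 4 := by
        have e1 : ((2:ℝ) ^ η) ^ 2 = 2 ^ (η + η) := by
          rw [Real.rpow_add two_pos]; ring
        have e2 : (2:ℝ) ^ (η + η) ≤ 2 ^ (2:ℝ) :=
          Real.rpow_le_rpow_of_exponent_le one_le_two (by linarith)
        have e3 : (2:ℝ) ^ (2:ℝ) = 4 := by
          rw [show (2:ℝ) = ((2:ℕ):ℝ) from by norm_num, Real.rpow_natCast]; norm_num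
        rw [e1]; rw [e3] at e2; exact e2
      have h4 : (((Δ * y):ℝ) ^ (1 - η)) ^ 2 = (Δ * y) ^ e := by
        rw [← Real.rpow_natCast ((Δ * y) ^ (1 - η)) 2, ← Real.rpow_mul hx0.le]
        congr 1
        simp only [hedef]; push_cast; ring
      have h5 : ((Δ * y):ℝ) ^ e = Δ ^ e * y ^ e := Real.mul_rpow hΔ0 hy0
      calc S ^ 2 ≤ (2 ^ η) ^ 2 * ((Δ * y) ^ (1 - η)) ^ 2 := by rw [← h2]; exact h1
        _ = (2 ^ η) ^ 2 * (Δ ^ e * y ^ e) := by rw [h4, h5]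
        _ ≤ 4 * (Δ ^ e * y ^ e) := by
            apply mul_le_mul_of_nonneg_right h3 (by positivity)
    have h1r : (1 + r ^ 2) ^ α ≤ 2 ^ α * r ^ (2 * α) := by
      have h1 : (1:ℝ) + r ^ 2 ≤ 2 * r ^ 2 := by nlinarith
      have h2 : ((1:ℝ) + r ^ 2) ^ α ≤ (2 * r ^ 2) ^ α :=
        Real.rpow_le_rpow (by positivity) h1 hα
      have h3 : ((2:ℝ) * r ^ 2) ^ α = 2 ^ α * (r ^ 2) ^ α :=
        Real.mul_rpow (by norm_num) (by positivity)
      have h4 : ((r:ℝ) ^ (2:ℕ)) ^ α = r ^ (2 * α) := by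
        rw [← Real.rpow_natCast r 2, ← Real.rpow_mul hr]
        norm_num
      rw [h3, h4] at h2
      exact h2
    have hye : y ^ e = r ^ (k * e) := by
      rw [hydef, ← Real.rpow_mul hr]
    have hrexp : r ^ (2 * α) * (r ^ (k * e)) / r ^ (2 * k) = r ^ (-γ) := by
      rw [← Real.rpow_add hr0, ← Real.rpow_sub hr0]
      congr 1
      simp only [hedef, hγ]; ring
    have key : s ^ (β - (d:ℝ)) * (1 + r ^ 2) ^ α * S ^ 2 / r ^ (2 * k)
        ≤ (2 ^ α * 4) * Δ ^ e * (s ^ (β - (d:ℝ)) * r ^ (-γ)) := by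
      have hr2k : 0 < r ^ (2 * k) := Real.rpow_pos_of_pos hr0 _
      calc s ^ (β - (d:ℝ)) * (1 + r ^ 2) ^ α * S ^ 2 / r ^ (2 * k)
          = s ^ (β - (d:ℝ)) * ((1 + r ^ 2) ^ α * S ^ 2) / r ^ (2 * k) := by ring
        _ ≤ s ^ (β - (d:ℝ)) * ((2 ^ α * r ^ (2 * α)) * (4 * (Δ ^ e * y ^ e))) / r ^ (2 * k) := by
            have hnum : (1 + r ^ 2) ^ α * S ^ 2 ≤ (2 ^ α * r ^ (2 * α)) * (4 * (Δ ^ e * y ^ e)) :=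
              mul_le_mul h1r hSsq2 (by positivity) (by positivity)
            have h' := mul_le_mul_of_nonneg_left hnum hsβ
            exact div_le_div_of_nonneg_right h' hr2k.le
        _ = (2 ^ α * 4) * Δ ^ e * (s ^ (β - (d:ℝ)) * (r ^ (2 * α) * (r ^ (k * e)) / r ^ (2 * k))) := by
            rw [hye]; ring
        _ = (2 ^ α * 4) * Δ ^ e * (s ^ (β - (d:ℝ)) * r ^ (-γ)) := by rw [hrexp]
    refine key.trans ?_
    have hΔe : 0 ≤ Δ ^ e := Real.rpow_nonneg hΔ0 _
    have hcoef : (2:ℝ) ^ α * 4 ≤ K := by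
      rw [hKdef]
      exact mul_le_mul_of_nonneg_left (le_max_right _ _) h2α.le
    have hprod : ∀ z : ℝ, 0 ≤ z → s ^ (β - (d:ℝ)) * r ^ (-γ) ≤ z →
        (2 ^ α * 4) * Δ ^ e * (s ^ (β - (d:ℝ)) * r ^ (-γ)) ≤ K * Δ ^ e * z := by
      intro z hz hle
      apply mul_le_mul _ hle (by positivity) (by positivity)
      exact mul_le_mul_of_nonneg_right hcoef hΔe
    have hrneg : 0 ≤ r ^ (-γ) := Real.rpow_nonneg hr _
    by_cases hs1 : s < 1
    · rw [if_pos hs1]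
      refine hprod _ hsβ ?_
      have : r ^ (-γ) ≤ 1 := Real.rpow_le_one_of_one_le_of_nonpos hr1 (by linarith)
      calc s ^ (β - (d:ℝ)) * r ^ (-γ) ≤ s ^ (β - (d:ℝ)) * 1 :=
            mul_le_mul_of_nonneg_left this hsβ
        _ = s ^ (β - (d:ℝ)) := mul_one _
    · rw [if_neg hs1]
      push_neg at hs1
      have hs0 : 0 < s := lt_of_lt_of_le one_pos hs1
      by_cases hsr : s ≤ r
      · rw [if_pos hsr]
        refine hprod _ (Real.rpow_nonneg hs _) ?_
        have h1 : r ^ (-γ) ≤ s ^ (-γ) := Real.rpow_le_rpow_of_nonpos hs0 hsr (by linarith)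
        calc s ^ (β - (d:ℝ)) * r ^ (-γ) ≤ s ^ (β - (d:ℝ)) * s ^ (-γ) :=
              mul_le_mul_of_nonneg_left h1 hsβ
          _ = s ^ (β - d - γ) := by rw [show β - (d:ℝ) - γ = (β - d) + -γ by ring, Real.rpow_add hs0]
      · rw [if_neg hsr]
        push_neg at hsr
        refine hprod _ (Real.rpow_nonneg hr _) ?_
        have h1 : s ^ (β - (d:ℝ)) ≤ r ^ (β - (d:ℝ)) :=
          Real.rpow_le_rpow_of_nonpos hr0 hsr.le hβd
        calc s ^ (β - (d:ℝ)) * r ^ (-γ) ≤ r ^ (β - (d:ℝ)) * r ^ (-γ) :=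
              mul_le_mul_of_nonneg_right h1 hrneg
          _ = r ^ (β - d - γ) := by rw [show β - (d:ℝ) - γ = (β - d) + -γ by ring, Real.rpow_add hr0]

theorem stmt_8 (d : ℕ) (hd : 1 ≤ d) (k α η T β : ℝ) (hk : 0 < k) (hα : 0 ≤ α)
    (hη₁ : α / k < η) (hη₂ : η < 1) (hT : 0 ≤ T)
    (hβ0 : 0 < β) (hβd : β < d) (hβ : β < 2 * (k * η - α)) :
    ∃ C : ℝ, ∀ t₁ t₂ : ℝ, 0 ≤ t₁ → t₁ ≤ t₂ → t₂ ≤ T →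
      ∀ ξ : EuclideanSpace ℝ (Fin d),
        ∫⁻ ζ : EuclideanSpace ℝ (Fin d),
            ENNReal.ofReal (‖ζ‖ ^ (β - d) * (1 + ‖ξ - ζ‖ ^ 2) ^ α *
              (Real.sin (t₂ * ‖ξ - ζ‖ ^ k) - Real.sin (t₁ * ‖ξ - ζ‖ ^ k)) ^ 2 /
                ‖ξ - ζ‖ ^ (2 * k))
          ≤ ENNReal.ofReal (C * (t₂ - t₁) ^ (2 * (1 - η))) := by
  classical
  have hη0 : 0 < η := lt_of_le_of_lt (div_nonneg hα hk.le) hη₁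
  set γ : ℝ := 2 * k * η - 2 * α with hγdef
  have hγβ : β < γ := by simp only [hγdef]; linarith
  have hγ0 : 0 < γ := hβ0.trans hγβ
  set K : ℝ := (2:ℝ) ^ α * max (T ^ (2 * η)) 4 with hKdef
  have h2α : (0:ℝ) < 2 ^ α := Real.rpow_pos_of_pos two_pos _
  have hK0 : 0 ≤ K := by
    have : (0:ℝ) ≤ max (T ^ (2 * η)) 4 := le_max_of_le_right (by norm_num)
    positivity
  -- the components of the uniform bound
  set A : ℝ≥0∞ := ∫⁻ ζ in Metric.ball (0 : EuclideanSpace ℝ (Fin d)) 1,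
    ENNReal.ofReal (‖ζ‖ ^ (β - d)) with hAdef
  have hA : A < ⊤ := aux_ball_lt_top d hβ0 hβd
  set B : ℝ≥0∞ := ∫⁻ ζ in {ζ : EuclideanSpace ℝ (Fin d) | 1 ≤ ‖ζ‖},
    ENNReal.ofReal (‖ζ‖ ^ (β - d - γ)) with hBdef
  have hB : B < ⊤ := by
    have hq : (d : ℝ) < γ + d - β := by linarith
    have h := aux_tail_lt_top d hq
    rw [show -(γ + (d:ℝ) - β) = β - d - γ from by ring] at h
    exact h
  set V : ℝ≥0∞ := volume (Metric.ball (0 : EuclideanSpace ℝ (Fin d)) 1) with hVdef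
  have hV : V < ⊤ := measure_ball_lt_top
  set M : ℝ≥0∞ := A + V + B + B with hMdef
  have hM : M ≠ ⊤ := by
    simp only [hMdef]
    exact (ENNReal.add_lt_top.2 ⟨ENNReal.add_lt_top.2 ⟨ENNReal.add_lt_top.2 ⟨hA, hV⟩, hB⟩, hB⟩).ne
  refine ⟨K * M.toReal, ?_⟩
  intro t₁ t₂ ht₁ ht₁₂ ht₂ ξ
  set Δ : ℝ := t₂ - t₁ with hΔdef
  have hΔ0 : 0 ≤ Δ := sub_nonneg.2 ht₁₂
  have hΔe : 0 ≤ Δ ^ (2 * (1 - η)) := Real.rpow_nonneg hΔ0 _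
  -- measurability facts
  have hmγ : Measurable fun ζ : EuclideanSpace ℝ (Fin d) =>
      ENNReal.ofReal (‖ζ‖ ^ (β - d - γ)) := aux_meas_rpow d _ (by intro h; nlinarith [hβd])
  have hmβ : Measurable fun ζ : EuclideanSpace ℝ (Fin d) =>
      ENNReal.ofReal (‖ζ‖ ^ (β - (d:ℝ))) := aux_meas_rpow d _ (by intro h; nlinarith [hβd])
  have hsub : Measurable fun ζ : EuclideanSpace ℝ (Fin d) => ξ - ζ :=
    measurable_const.sub measurable_id
  have hsetξ : MeasurableSet {ζ : EuclideanSpace ℝ (Fin d) | 1 ≤ ‖ξ - ζ‖} :=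
    measurableSet_le measurable_const hsub.norm
  have hset0 : MeasurableSet {ζ : EuclideanSpace ℝ (Fin d) | 1 ≤ ‖ζ‖} :=
    measurableSet_le measurable_const measurable_norm
  -- the majorant
  set G : EuclideanSpace ℝ (Fin d) → ℝ≥0∞ := fun ζ =>
    (Metric.ball (0 : EuclideanSpace ℝ (Fin d)) 1).indicator
      (fun ζ => ENNReal.ofReal (‖ζ‖ ^ (β - (d:ℝ)))) ζ
    + (Metric.ball ξ 1).indicator 1 ζ
    + {ζ : EuclideanSpace ℝ (Fin d) | 1 ≤ ‖ζ‖}.indicator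
      (fun ζ => ENNReal.ofReal (‖ζ‖ ^ (β - d - γ))) ζ
    + {ζ : EuclideanSpace ℝ (Fin d) | 1 ≤ ‖ξ - ζ‖}.indicator
      (fun ζ => ENNReal.ofReal (‖ξ - ζ‖ ^ (β - d - γ))) ζ with hGdef
  have hGmeas : Measurable G := by
    apply Measurable.add
    apply Measurable.add
    apply Measurable.add
    · exact hmβ.indicator measurableSet_ball
    · exact measurable_one.indicator measurableSet_ball
    · exact hmγ.indicator hset0
    · exact ((hmγ.comp hsub)).indicator hsetξ
  -- pointwise bound
  have hpt : ∀ ζ : EuclideanSpace ℝ (Fin d),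
      ENNReal.ofReal (‖ζ‖ ^ (β - d) * (1 + ‖ξ - ζ‖ ^ 2) ^ α *
        (Real.sin (t₂ * ‖ξ - ζ‖ ^ k) - Real.sin (t₁ * ‖ξ - ζ‖ ^ k)) ^ 2 /
          ‖ξ - ζ‖ ^ (2 * k))
        ≤ ENNReal.ofReal (K * Δ ^ (2 * (1 - η))) * G ζ := by
    intro ζ
    have hre := aux_pointwise d k α η T β γ hk hα hη0 hη₂ hT (by push_cast; linarith) rfl hγ0
      t₁ t₂ ht₁ ht₁₂ ht₂ ‖ζ‖ ‖ξ - ζ‖ (norm_nonneg _) (norm_nonneg _)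
    have hGge : ENNReal.ofReal
        (if ‖ξ - ζ‖ < 1 then (if ‖ζ‖ < 1 then ‖ζ‖ ^ (β - (d:ℝ)) else 1)
         else (if ‖ζ‖ < 1 then ‖ζ‖ ^ (β - (d:ℝ))
               else (if ‖ζ‖ ≤ ‖ξ - ζ‖ then ‖ζ‖ ^ (β - d - γ) else ‖ξ - ζ‖ ^ (β - d - γ))))
        ≤ G ζ := by
      simp only [hGdef]
      split_ifs with h1 h2 h3 h4
      · -- r < 1, s < 1 : first summand
        have hmem : ζ ∈ Metric.ball (0 : EuclideanSpace ℝ (Fin d)) 1 :=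
          mem_ball_zero_iff.2 h2
        refine le_add_right (le_add_right ?_)
        rw [Set.indicator_of_mem hmem]
        exact self_le_add_right _ _
      · -- r < 1, s ≥ 1 : second summand
        have hmem : ζ ∈ Metric.ball ξ 1 := by
          rw [mem_ball, dist_eq_norm, norm_sub_rev]
          exact h1
        refine le_add_right (le_add_right ?_)
        rw [Set.indicator_of_mem hmem]
        simp only [Pi.one_apply, ENNReal.ofReal_one]
        exact self_le_add_left _ _
      · -- r ≥ 1, s < 1 : first summand
        have hmem : ζ ∈ Metric.ball (0 : EuclideanSpace ℝ (Fin d)) 1 :=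
          mem_ball_zero_iff.2 h3
        refine le_add_right (le_add_right ?_)
        rw [Set.indicator_of_mem hmem]
        exact self_le_add_right _ _
      · -- r ≥ 1, s ≥ 1, s ≤ r : third summand
        have hmem : ζ ∈ {ζ : EuclideanSpace ℝ (Fin d) | 1 ≤ ‖ζ‖} := by
          simpa using not_lt.1 h3
        refine le_add_right ?_
        rw [Set.indicator_of_mem hmem]
        exact self_le_add_left _ _
      · -- r ≥ 1, s ≥ 1, r < s : fourth summand
        have hmem : ζ ∈ {ζ : EuclideanSpace ℝ (Fin d) | 1 ≤ ‖ξ - ζ‖} := by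
          simpa using not_lt.1 h1
        rw [Set.indicator_of_mem hmem]
        exact self_le_add_left _ _
    calc ENNReal.ofReal (‖ζ‖ ^ (β - d) * (1 + ‖ξ - ζ‖ ^ 2) ^ α *
          (Real.sin (t₂ * ‖ξ - ζ‖ ^ k) - Real.sin (t₁ * ‖ξ - ζ‖ ^ k)) ^ 2 /
            ‖ξ - ζ‖ ^ (2 * k))
        ≤ ENNReal.ofReal ((K * Δ ^ (2 * (1 - η))) *
            (if ‖ξ - ζ‖ < 1 then (if ‖ζ‖ < 1 then ‖ζ‖ ^ (β - (d:ℝ)) else 1)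
             else (if ‖ζ‖ < 1 then ‖ζ‖ ^ (β - (d:ℝ))
                   else (if ‖ζ‖ ≤ ‖ξ - ζ‖ then ‖ζ‖ ^ (β - d - γ)
                         else ‖ξ - ζ‖ ^ (β - d - γ))))) := by
          apply ENNReal.ofReal_le_ofReal
          rw [hKdef, hΔdef]
          exact hre
      _ = ENNReal.ofReal (K * Δ ^ (2 * (1 - η))) * ENNReal.ofReal _ :=
          ENNReal.ofReal_mul (by positivity)
      _ ≤ ENNReal.ofReal (K * Δ ^ (2 * (1 - η))) * G ζ := mul_le_mul_of_nonneg_left hGge (zero_le)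
  -- integral of the majorant
  have h1m : Measurable ((Metric.ball (0 : EuclideanSpace ℝ (Fin d)) 1).indicator
      (fun ζ => ENNReal.ofReal (‖ζ‖ ^ (β - (d:ℝ))))) := hmβ.indicator measurableSet_ball
  have h2m : Measurable ((Metric.ball ξ 1).indicator
      (1 : EuclideanSpace ℝ (Fin d) → ℝ≥0∞)) := measurable_one.indicator measurableSet_ball
  have h3m : Measurable ({ζ : EuclideanSpace ℝ (Fin d) | 1 ≤ ‖ζ‖}.indicator
      (fun ζ => ENNReal.ofReal (‖ζ‖ ^ (β - d - γ)))) := hmγ.indicator hset0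
  have e1 : ∫⁻ ζ, (Metric.ball (0 : EuclideanSpace ℝ (Fin d)) 1).indicator
      (fun ζ => ENNReal.ofReal (‖ζ‖ ^ (β - (d:ℝ)))) ζ = A := by
    rw [lintegral_indicator measurableSet_ball]
  have e2 : ∫⁻ ζ, (Metric.ball ξ 1).indicator (1 : EuclideanSpace ℝ (Fin d) → ℝ≥0∞) ζ = V := by
    rw [lintegral_indicator_one measurableSet_ball, hVdef, Measure.addHaar_ball_center]
  have e3 : ∫⁻ ζ, {ζ : EuclideanSpace ℝ (Fin d) | 1 ≤ ‖ζ‖}.indicator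
      (fun ζ => ENNReal.ofReal (‖ζ‖ ^ (β - d - γ))) ζ = B := by
    rw [lintegral_indicator hset0]
  have e4 : ∫⁻ ζ, {ζ : EuclideanSpace ℝ (Fin d) | 1 ≤ ‖ξ - ζ‖}.indicator
      (fun ζ => ENNReal.ofReal (‖ξ - ζ‖ ^ (β - d - γ))) ζ = B := by
    set g : EuclideanSpace ℝ (Fin d) → ℝ≥0∞ :=
      {w : EuclideanSpace ℝ (Fin d) | 1 ≤ ‖w‖}.indicator
        (fun w => ENNReal.ofReal (‖w‖ ^ (β - d - γ))) with hgdef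
    have hpt4 : ∀ ζ, {ζ : EuclideanSpace ℝ (Fin d) | 1 ≤ ‖ξ - ζ‖}.indicator
        (fun ζ => ENNReal.ofReal (‖ξ - ζ‖ ^ (β - d - γ))) ζ = g (ξ - ζ) := by
      intro ζ
      by_cases h : (1:ℝ) ≤ ‖ξ - ζ‖ <;> simp [hgdef, Set.indicator, h]
    calc ∫⁻ ζ, {ζ : EuclideanSpace ℝ (Fin d) | 1 ≤ ‖ξ - ζ‖}.indicator
          (fun ζ => ENNReal.ofReal (‖ξ - ζ‖ ^ (β - d - γ))) ζ
        = ∫⁻ ζ, g ((MeasurableEquiv.subLeft ξ) ζ) := by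
          simp_rw [hpt4]; rfl
      _ = ∫⁻ w, g w ∂(Measure.map (MeasurableEquiv.subLeft ξ) volume) :=
          (lintegral_map_equiv g (MeasurableEquiv.subLeft ξ)).symm
      _ = ∫⁻ w, g w := by
          rw [show ⇑(MeasurableEquiv.subLeft ξ) = fun ζ : EuclideanSpace ℝ (Fin d) => ξ - ζ
            from rfl, Measure.map_sub_left_eq_self volume ξ]
      _ = B := by rw [hgdef, lintegral_indicator hset0]
  have hGint : ∫⁻ ζ, G ζ = M := by
    simp only [hGdef]
    rw [lintegral_add_left (f := fun ζ => (Metric.ball (0 : EuclideanSpace ℝ (Fin d)) 1).indicator (fun ζ => ENNReal.ofReal (‖ζ‖ ^ (β - (d:ℝ)))) ζ + (Metric.ball ξ 1).indicator (1 : EuclideanSpace ℝ (Fin d) → ℝ≥0∞) ζ + {ζ : EuclideanSpace ℝ (Fin d) | 1 ≤ ‖ζ‖}.indicator (fun ζ => ENNReal.ofReal (‖ζ‖ ^ (β - d - γ))) ζ) ((h1m.add h2m).add h3m),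
      lintegral_add_left (f := fun ζ => (Metric.ball (0 : EuclideanSpace ℝ (Fin d)) 1).indicator (fun ζ => ENNReal.ofReal (‖ζ‖ ^ (β - (d:ℝ)))) ζ + (Metric.ball ξ 1).indicator (1 : EuclideanSpace ℝ (Fin d) → ℝ≥0∞) ζ) (h1m.add h2m),
      lintegral_add_left h1m, e1, e2, e3, e4, hMdef]
  -- conclusion
  calc ∫⁻ ζ : EuclideanSpace ℝ (Fin d),
        ENNReal.ofReal (‖ζ‖ ^ (β - d) * (1 + ‖ξ - ζ‖ ^ 2) ^ α *
          (Real.sin (t₂ * ‖ξ - ζ‖ ^ k) - Real.sin (t₁ * ‖ξ - ζ‖ ^ k)) ^ 2 /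
            ‖ξ - ζ‖ ^ (2 * k))
      ≤ ∫⁻ ζ, ENNReal.ofReal (K * Δ ^ (2 * (1 - η))) * G ζ := lintegral_mono hpt
    _ = ENNReal.ofReal (K * Δ ^ (2 * (1 - η))) * ∫⁻ ζ, G ζ :=
        lintegral_const_mul _ hGmeas
    _ = ENNReal.ofReal (K * Δ ^ (2 * (1 - η))) * M := by rw [hGint]
    _ = ENNReal.ofReal (K * M.toReal * Δ ^ (2 * (1 - η))) := by
        conv_lhs => rw [← ENNReal.ofReal_toReal hM]
        rw [← ENNReal.ofReal_mul (mul_nonneg hK0 hΔe)]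
        congr 1
        ring
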